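/- Let Λ be an artin algebra and suppose 0 → (a : A' → A) → (b : B' → B) → (c : C' → C) → 0 is a short exact sequence in the submodule category S(Λ) (both component sequences exact) which is an Auslander-Reiten (almost split) sequence in S(Λ). If the morphism c : C' → C is not a split monomorphism of Λ-modules, then both component sequences 0 → A' → B' → C' → 0 and 0 → A → B → C → 0 are split exact sequences of Λ-modules. -/

import Mathlib

universe u

/-- A linear map factors through an injective `Λ`-module. -/
def FactorsThroughInjective (Λ : Type u) [Ring Λ] {A B : Type u}
    [AddCommGroup A] [Module Λ A] [AddCommGroup B] [Module Λ B]
    (h : A →ₗ[Λ] B) : Prop :=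
  ∃ (I : Type u) (_ : AddCommGroup I) (_ : Module Λ I),
    Module.Injective Λ I ∧ ∃ (p : A →ₗ[Λ] I) (q : I →ₗ[Λ] B), h = q ∘ₗ p

/-- `e : M →ₗ[Λ] I` is an injective envelope: `I` is injective, `e` is injective,
and the image of `e` is an essential submodule of `I`. -/
def IsInjectiveEnvelope (Λ : Type u) [Ring Λ] {M I : Type u}
    [AddCommGroup M] [Module Λ M] [AddCommGroup I] [Module Λ I]
    (e : M →ₗ[Λ] I) : Prop :=
  Module.Injective Λ I ∧ Function.Injective e ∧
    ∀ N : Submodule Λ I, N ≠ ⊥ → N ⊓ LinearMap.range e ≠ ⊥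

/-- A short exact sequence `0 → a → b → c → 0` in `S(Λ)`: the objects `a, b, c` are
monomorphisms, the morphisms `(i', i) : a → b` and `(p', p) : b → c` are commutative
squares, and both component sequences of modules are short exact. -/
def IsSESinS (Λ : Type u) [Ring Λ] {A' A B' B C' C : Type u}
    [AddCommGroup A'] [Module Λ A'] [AddCommGroup A] [Module Λ A]
    [AddCommGroup B'] [Module Λ B'] [AddCommGroup B] [Module Λ B]
    [AddCommGroup C'] [Module Λ C'] [AddCommGroup C] [Module Λ C]
    (a : A' →ₗ[Λ] A) (b : B' →ₗ[Λ] B) (c : C' →ₗ[Λ] C)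
    (i' : A' →ₗ[Λ] B') (i : A →ₗ[Λ] B) (p' : B' →ₗ[Λ] C') (p : B →ₗ[Λ] C) : Prop :=
  Function.Injective a ∧ Function.Injective b ∧ Function.Injective c ∧
  b ∘ₗ i' = i ∘ₗ a ∧ c ∘ₗ p' = p ∘ₗ b ∧
  Function.Injective i' ∧ Function.Injective i ∧
  Function.Surjective p' ∧ Function.Surjective p ∧
  LinearMap.ker p' = LinearMap.range i' ∧ LinearMap.ker p = LinearMap.range i

/-- if `0 → a → b → c → 0` is an Auslander-Reiten (almost split) sequence
in `S(Λ)` and `c : C' → C` is not a split monomorphism of modules, then both component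
sequences `0 → A' → B' → C' → 0` and `0 → A → B → C → 0` of modules are split exact. -/
theorem stmt18
    (k : Type u) [CommRing k] [IsArtinianRing k]
    (Λ : Type u) [Ring Λ] [Algebra k Λ] [Module.Finite k Λ]
    (A' A B' B C' C : Type u)
    [AddCommGroup A'] [Module Λ A'] [Module.Finite Λ A']
    [AddCommGroup A] [Module Λ A] [Module.Finite Λ A]
    [AddCommGroup B'] [Module Λ B'] [Module.Finite Λ B']
    [AddCommGroup B] [Module Λ B] [Module.Finite Λ B]
    [AddCommGroup C'] [Module Λ C'] [Module.Finite Λ C']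
    [AddCommGroup C] [Module Λ C] [Module.Finite Λ C]
    (a : A' →ₗ[Λ] A) (b : B' →ₗ[Λ] B) (c : C' →ₗ[Λ] C)
    (f' : A' →ₗ[Λ] B') (f : A →ₗ[Λ] B) (g' : B' →ₗ[Λ] C') (g : B →ₗ[Λ] C)
    (hses : IsSESinS Λ a b c f' f g' g)
    -- the sequence does not split
    (hnonsplit : ¬ ∃ (s' : C' →ₗ[Λ] B') (s : C →ₗ[Λ] B),
      b ∘ₗ s' = s ∘ₗ c ∧ g' ∘ₗ s' = LinearMap.id ∧ g ∘ₗ s = LinearMap.id)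
    -- the end terms a and c are indecomposable objects of S(Λ)
    (hindA : ∀ (u : A' →ₗ[Λ] A') (v : A →ₗ[Λ] A), v ∘ₗ a = a ∘ₗ u →
      u ∘ₗ u = u → v ∘ₗ v = v →
      (u = 0 ∧ v = 0) ∨ (u = LinearMap.id ∧ v = LinearMap.id))
    (hindC : ∀ (u : C' →ₗ[Λ] C') (v : C →ₗ[Λ] C), v ∘ₗ c = c ∘ₗ u →
      u ∘ₗ u = u → v ∘ₗ v = v →
      (u = 0 ∧ v = 0) ∨ (u = LinearMap.id ∧ v = LinearMap.id))
    -- (g', g) is right almost split: every morphism in S(Λ) to c which is not a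
    -- split epimorphism factors through (g', g)
    (hras : ∀ (X' X : Type u)
      [AddCommGroup X'] [Module Λ X'] [Module.Finite Λ X']
      [AddCommGroup X] [Module Λ X] [Module.Finite Λ X]
      (x : X' →ₗ[Λ] X), Function.Injective x →
      ∀ (t' : X' →ₗ[Λ] C') (t : X →ₗ[Λ] C), c ∘ₗ t' = t ∘ₗ x →
      ¬ (∃ (s' : C' →ₗ[Λ] X') (s : C →ₗ[Λ] X),
          x ∘ₗ s' = s ∘ₗ c ∧ t' ∘ₗ s' = LinearMap.id ∧ t ∘ₗ s = LinearMap.id) →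
      ∃ (u' : X' →ₗ[Λ] B') (u : X →ₗ[Λ] B),
        b ∘ₗ u' = u ∘ₗ x ∧ g' ∘ₗ u' = t' ∧ g ∘ₗ u = t)
    -- c is not a split monomorphism of Λ-modules
    (hc : ¬ ∃ r : C →ₗ[Λ] C', r ∘ₗ c = LinearMap.id) :
    (∃ s' : C' →ₗ[Λ] B', g' ∘ₗ s' = LinearMap.id) ∧
    (∃ s : C →ₗ[Λ] B, g ∘ₗ s = LinearMap.id) := by
  constructor
  · -- upper sequence splits: test object (id : C' → C'), morphism (id, c)
    obtain ⟨u', u, hbu, hgu', hgu⟩ :=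
      hras C' C' LinearMap.id Function.injective_id LinearMap.id c (by ext x; rfl)
        (by
          rintro ⟨s', s, h1, h2, h3⟩
          exact hc ⟨s, by rw [← h1]; simpa using h2⟩)
    exact ⟨u', hgu'⟩
  · -- lower sequence splits: test object (0 : PUnit → C), morphism (0, id)
    have hC' : ∃ y : C', y ≠ 0 := by
      by_contra h
      push_neg at h
      exact hc ⟨0, by ext y; simp [h]⟩
    obtain ⟨u', u, hbu, hgu', hgu⟩ :=
      hras PUnit C (0 : PUnit.{u+1} →ₗ[Λ] C)
        (fun x y _ => Subsingleton.elim x y)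
        0 LinearMap.id (by ext x; simp)
        (by
          rintro ⟨s', s, h1, h2, h3⟩
          obtain ⟨y, hy⟩ := hC'
          have := congrFun (congrArg DFunLike.coe h2) y
          simp at this
          exact hy this.symm)
    exact ⟨u, hgu⟩
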